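/- Let 𝒜, ℬ be unital C*-algebras and φ : E(𝒜) → E(ℬ) an E-isomorphism. Then φ(λA) = λφ(A) for every effect A ∈ E(𝒜) and every real λ ∈ [0,1]. -/

import Mathlib

set_option synthInstance.maxHeartbeats 1000000
set_option maxHeartbeats 1000000

/-- The effects of a unital C*-algebra: elements `a` with `0 ≤ a ≤ 1`. -/
def IsEffect {A : Type*} [CStarAlgebra A] [PartialOrder A] [StarOrderedRing A] (a : A) : Prop :=
  0 ≤ a ∧ a ≤ 1

/-- An E-isomorphism is homogeneous with respect to real scalars in [0,1]. -/
theorem EIso_real_homogeneous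
    {A B : Type*} [CStarAlgebra A] [PartialOrder A] [StarOrderedRing A]
    [CStarAlgebra B] [PartialOrder B] [StarOrderedRing B]
    (φ : {a : A // IsEffect a} → {b : B // IsEffect b})
    (hbij : Function.Bijective φ)
    (hiff : ∀ a b : {a : A // IsEffect a},
      IsEffect ((a : A) + b) ↔ IsEffect ((φ a : B) + φ b))
    (hadd : ∀ (a b : {a : A // IsEffect a}) (h : IsEffect ((a : A) + b)),
      (φ ⟨(a : A) + b, h⟩ : B) = (φ a : B) + φ b) :
    ∀ (a : {a : A // IsEffect a}) (l : ℝ), 0 ≤ l → l ≤ 1 →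
      ∀ h : IsEffect (l • (a : A)),
        (φ ⟨l • (a : A), h⟩ : B) = l • (φ a : B) := by
  classical
  -- smul order helper
  have hsmul_le : ∀ (s t : ℝ) (x : A), 0 ≤ x → s ≤ t → s • x ≤ t • x := by
    intro s t x hx hst
    rw [← sub_nonneg, ← sub_smul]
    exact smul_nonneg (by linarith) hx
  -- φ is monotone
  have hmono : ∀ a b : {a : A // IsEffect a}, (a : A) ≤ (b : A) → (φ a : B) ≤ (φ b : B) := by
    intro a b hab
    have hc : IsEffect ((b : A) - a) :=
      ⟨sub_nonneg.2 hab, (sub_le_self _ a.2.1).trans b.2.2⟩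
    have hsum : IsEffect ((a : A) + ((b : A) - a)) := by
      have : (a : A) + ((b : A) - a) = b := by abel
      rw [this]; exact b.2
    have h1 := hadd a ⟨_, hc⟩ hsum
    have h2 : (⟨(a : A) + ((b : A) - a), hsum⟩ : {a : A // IsEffect a}) = b :=
      Subtype.ext (show (a : A) + ((b : A) - a) = b by abel)
    rw [h2] at h1
    have : (0 : B) ≤ (φ ⟨(b : A) - a, hc⟩ : B) := (φ ⟨(b : A) - a, hc⟩).2.1
    calc (φ a : B) = φ a + 0 := (add_zero _).symm
    _ ≤ (φ a : B) + φ ⟨(b : A) - a, hc⟩ := by exact add_le_add (le_refl _) this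
    _ = φ b := h1.symm
  -- φ 0 = 0
  have hz : IsEffect (0 : A) := ⟨le_refl 0, zero_le_one⟩
  set z : {a : A // IsEffect a} := ⟨0, hz⟩ with hzdef
  have hφ0 : (φ z : B) = 0 := by
    have h0 : IsEffect ((z : A) + z) := by rw [hzdef]; simpa using hz
    have h1 := hadd z z h0
    have h2 : (⟨(z : A) + z, h0⟩ : {a : A // IsEffect a}) = z := Subtype.ext (by simp [hzdef])
    rw [h2] at h1
    exact left_eq_add.mp h1
  have hφ0' : (φ z : B) = 0 := hφ0
  -- natural number homogeneity
  have hnat : ∀ (b : {a : A // IsEffect a}) (n : ℕ),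
      ∀ h : IsEffect ((n : ℝ) • (b : A)),
        (φ ⟨(n : ℝ) • (b : A), h⟩ : B) = (n : ℝ) • (φ b : B) := by
    intro b n
    induction n with
    | zero =>
      intro h
      have h2 : (⟨((0 : ℕ) : ℝ) • (b : A), h⟩ : {a : A // IsEffect a}) = z :=
        Subtype.ext (by rw [hzdef]; simp)
      rw [h2, hφ0]; simp
    | succ n ih =>
      intro h
      have hn : IsEffect ((n : ℝ) • (b : A)) := by
        refine ⟨smul_nonneg (by positivity) b.2.1, le_trans ?_ h.2⟩
        exact hsmul_le _ _ _ b.2.1 (by push_cast; linarith)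
      have hsplit : ((n + 1 : ℕ) : ℝ) • (b : A) = (n : ℝ) • (b : A) + b := by
        push_cast; rw [add_smul, one_smul]
      have hsum : IsEffect (((⟨(n : ℝ) • (b : A), hn⟩ : {a : A // IsEffect a}) : A) + b) := by
        simpa [← hsplit] using h
      have h1 := hadd ⟨(n : ℝ) • (b : A), hn⟩ b hsum
      have h2 : (⟨((n + 1 : ℕ) : ℝ) • (b : A), h⟩ : {a : A // IsEffect a}) =
          ⟨((⟨(n : ℝ) • (b : A), hn⟩ : {a : A // IsEffect a}) : A) + b, hsum⟩ :=
        Subtype.ext (by simpa using hsplit)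
      rw [h2, h1, ih hn]
      push_cast
      rw [add_smul, one_smul]
  -- fractional homogeneity : (m/n) • a
  have hfrac : ∀ (a : {a : A // IsEffect a}) (m n : ℕ), 0 < n →
      ∀ h : IsEffect (((m : ℝ) / n) • (a : A)),
        (φ ⟨((m : ℝ) / n) • (a : A), h⟩ : B) = ((m : ℝ) / n) • (φ a : B) := by
    intro a m n hn h
    have hn' : (0 : ℝ) < n := by exact_mod_cast hn
    have hbE : IsEffect ((1 / (n : ℝ)) • (a : A)) := by
      refine ⟨smul_nonneg (by positivity) a.2.1, le_trans ?_ a.2.2⟩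
      calc (1 / (n : ℝ)) • (a : A) ≤ (1 : ℝ) • (a : A) := by
            apply hsmul_le _ _ _ a.2.1
            rw [div_le_one hn']; exact_mod_cast hn
      _ = a := one_smul _ _
    set b : {a : A // IsEffect a} := ⟨(1 / (n : ℝ)) • (a : A), hbE⟩ with hbdef
    -- n • b = a
    have hnb : (n : ℝ) • (b : A) = (a : A) := by
      rw [hbdef]
      rw [smul_smul]
      rw [mul_one_div, div_self hn'.ne', one_smul]
    have haE : IsEffect ((n : ℝ) • (b : A)) := by rw [hnb]; exact a.2
    have h1 := hnat b n haE
    have h2 : (⟨(n : ℝ) • (b : A), haE⟩ : {a : A // IsEffect a}) = a := Subtype.ext hnb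
    rw [h2] at h1
    have hφb : (φ b : B) = (1 / (n : ℝ)) • (φ a : B) := by
      have := congrArg (fun x => (1 / (n : ℝ)) • x) h1
      simpa [smul_smul, one_div, inv_mul_cancel₀ hn'.ne'] using this.symm
    -- m • b = (m/n) • a
    have hmb : (m : ℝ) • (b : A) = ((m : ℝ) / n) • (a : A) := by
      rw [hbdef, smul_smul, mul_one_div]
    have hmE : IsEffect ((m : ℝ) • (b : A)) := by rw [hmb]; exact h
    have h3 := hnat b m hmE
    have h4 : (⟨(m : ℝ) • (b : A), hmE⟩ : {a : A // IsEffect a}) =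
        ⟨((m : ℝ) / n) • (a : A), h⟩ := Subtype.ext hmb
    rw [h4] at h3
    rw [h3, hφb, smul_smul, mul_one_div]
  -- main argument
  intro a l hl0 hl1 h
  set x : B := (φ ⟨l • (a : A), h⟩ : B) with hxdef
  -- lower bounds
  have hlow : ∀ n : ℕ, 1 ≤ n → ((⌊l * n⌋₊ : ℝ) / n) • (φ a : B) ≤ x := by
    intro n hn
    have hn' : (0 : ℝ) < n := by exact_mod_cast hn
    set q : ℝ := (⌊l * n⌋₊ : ℝ) / n with hqdef
    have hq0 : 0 ≤ q := by positivity
    have hql : q ≤ l := by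
      rw [hqdef, div_le_iff₀ hn']
      calc (⌊l * n⌋₊ : ℝ) ≤ l * n := Nat.floor_le (by positivity)
      _ = l * n := rfl
    have hle : q • (a : A) ≤ l • (a : A) := hsmul_le _ _ _ a.2.1 hql
    have hqE : IsEffect (q • (a : A)) := ⟨smul_nonneg hq0 a.2.1, hle.trans h.2⟩
    have := hfrac a ⌊l * n⌋₊ n (by omega) hqE
    calc q • (φ a : B) = (φ ⟨q • (a : A), hqE⟩ : B) := this.symm
    _ ≤ x := hmono _ _ hle
  -- upper bounds
  have hup : ∀ n : ℕ, 1 ≤ n → x ≤ ((⌈l * n⌉₊ : ℝ) / n) • (φ a : B) := by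
    intro n hn
    have hn' : (0 : ℝ) < n := by exact_mod_cast hn
    set r : ℝ := (⌈l * n⌉₊ : ℝ) / n with hrdef
    have hlr : l ≤ r := by
      rw [hrdef, le_div_iff₀ hn']
      exact Nat.le_ceil _
    have hr1 : r ≤ 1 := by
      rw [hrdef, div_le_one hn']
      have : (⌈l * n⌉₊ : ℕ) ≤ n := Nat.ceil_le.2 (by nlinarith)
      exact_mod_cast this
    have hle : l • (a : A) ≤ r • (a : A) := hsmul_le _ _ _ a.2.1 hlr
    have hrE : IsEffect (r • (a : A)) := by
      refine ⟨smul_nonneg (hl0.trans hlr) a.2.1, ?_⟩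
      calc r • (a : A) ≤ (1 : ℝ) • (a : A) := hsmul_le _ _ _ a.2.1 hr1
      _ = a := one_smul _ _
      _ ≤ 1 := a.2.2
    have := hfrac a ⌈l * n⌉₊ n (by omega) hrE
    calc x ≤ (φ ⟨r • (a : A), hrE⟩ : B) := hmono _ _ hle
    _ = r • (φ a : B) := this
  -- limits
  have hfl : Filter.Tendsto (fun n : ℕ => ((⌊l * n⌋₊ : ℝ) / n) • (φ a : B))
      Filter.atTop (nhds (l • (φ a : B))) := by
    exact ((tendsto_nat_floor_mul_div_atTop hl0).comp
      tendsto_natCast_atTop_atTop).smul_const _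
  have hcl : Filter.Tendsto (fun n : ℕ => ((⌈l * n⌉₊ : ℝ) / n) • (φ a : B))
      Filter.atTop (nhds (l • (φ a : B))) := by
    exact ((tendsto_nat_ceil_mul_div_atTop hl0).comp
      tendsto_natCast_atTop_atTop).smul_const _
  have h1 : l • (φ a : B) ≤ x :=
    le_of_tendsto hfl (Filter.eventually_atTop.2 ⟨1, hlow⟩)
  have h2 : x ≤ l • (φ a : B) :=
    ge_of_tendsto hcl (Filter.eventually_atTop.2 ⟨1, hup⟩)
  exact le_antisymm h2 h1
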